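/- If A is a real (D+1)×(D+1) matrix satisfying A = J_D A^T J_D (i.e., A is J_D-self-adjoint), then every J_D-eigenvalue of A is real; that is, if A J_D v = sgn([v*,v]) λ v for some nonzero v in C^{D+1} with [v*,v] ≠ 0, then λ is real. -/
import Mathlib


open Matrix BigOperators

/-- The Lorentz signature matrix J_D = diag(-1, 1, …, 1) over ℂ. -/
noncomputable def JmatC (D : ℕ) : Matrix (Fin (D + 1)) (Fin (D + 1)) ℂ :=
  Matrix.diagonal (fun i => if i = 0 then (-1 : ℂ) else 1)

/-- The Lorentz signature matrix J_D = diag(-1, 1, …, 1) over ℝ. -/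
noncomputable def JmatR (D : ℕ) : Matrix (Fin (D + 1)) (Fin (D + 1)) ℝ :=
  Matrix.diagonal (fun i => if i = 0 then (-1 : ℝ) else 1)

/-- Sign of a complex number (used on reals embedded in ℂ). -/
noncomputable def csgn (z : ℂ) : ℂ :=
  if 0 < z.re then 1 else if z.re < 0 then -1 else 0

lemma JmatC_eq_map (D : ℕ) : JmatC D = (JmatR D).map Complex.ofReal := by
  simp [JmatC, JmatR, Matrix.diagonal_map, apply_ite Complex.ofReal]

lemma JmatC_herm (D : ℕ) : (JmatC D)ᴴ = JmatC D := by
  ext i j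
  simp only [JmatC, Matrix.conjTranspose_apply, Matrix.diagonal_apply]
  split_ifs with h1 h2 <;> simp_all [eq_comm]

lemma map_mul_ofReal {n : ℕ} (M N : Matrix (Fin n) (Fin n) ℝ) :
    (M * N).map Complex.ofReal = M.map Complex.ofReal * N.map Complex.ofReal := by
  have h := Matrix.map_mul (L := M) (M := N) (f := Complex.ofRealHom)
  rw [show (⇑Complex.ofRealHom : ℝ → ℂ) = Complex.ofReal from rfl] at h
  exact h

lemma hermitian_quad_real {n : ℕ} (M : Matrix (Fin n) (Fin n) ℂ) (hM : Mᴴ = M)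
    (v : Fin n → ℂ) : star (star v ⬝ᵥ (M *ᵥ v)) = star v ⬝ᵥ (M *ᵥ v) := by
  conv_rhs => rw [star_dotProduct, star_mulVec, hM, ← dotProduct_mulVec]

/-- If A is real and J_D-self-adjoint (A = J_D Aᵀ J_D), then every
J_D-eigenvalue of A is real: if A J_D v = sgn([v*,v]) λ v with [v*,v] ≠ 0, then λ ∈ ℝ. -/
theorem j_selfadjoint_real_j_eigenvalues
    (D : ℕ) (A : Matrix (Fin (D + 1)) (Fin (D + 1)) ℝ)
    (hA : A = JmatR D * Aᵀ * JmatR D)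
    (v : Fin (D + 1) → ℂ) (hv : v ≠ 0) (lam : ℂ)
    (hnull : star v ⬝ᵥ (JmatC D *ᵥ v) ≠ 0)
    (heig : (A.map Complex.ofReal * JmatC D) *ᵥ v =
      (csgn (star v ⬝ᵥ (JmatC D *ᵥ v)) * lam) • v) :
    lam.im = 0 := by
  set q : ℂ := star v ⬝ᵥ (JmatC D *ᵥ v) with hq
  set μ : ℂ := csgn q * lam with hμ
  -- q is real
  have hqreal : star q = q := hermitian_quad_real _ (JmatC_herm D) v
  have hqim : q.im = 0 := by
    have := congrArg Complex.im hqreal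
    simp only [Complex.star_def, Complex.conj_im] at this
    linarith
  -- J_R * J_R = 1
  have hJ2 : JmatR D * JmatR D = 1 := by
    rw [JmatR, Matrix.diagonal_mul_diagonal]
    have h : (fun i : Fin (D+1) => (if i = 0 then (-1:ℝ) else 1) * (if i = 0 then (-1:ℝ) else 1)) = fun _ => 1 := by
      funext i; split_ifs <;> ring
    rw [h, Matrix.diagonal_one]
  -- A * J = J * Aᵀ
  have hAJ : A * JmatR D = JmatR D * Aᵀ := by
    conv_lhs => rw [hA]
    rw [Matrix.mul_assoc, Matrix.mul_assoc, hJ2, Matrix.mul_one]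
  -- M := A_C * J_C is Hermitian
  have hMherm : (A.map Complex.ofReal * JmatC D)ᴴ = A.map Complex.ofReal * JmatC D := by
    rw [Matrix.conjTranspose_mul, JmatC_herm]
    have h1 : (A.map Complex.ofReal)ᴴ = Aᵀ.map Complex.ofReal := by
      ext i j; simp [Matrix.conjTranspose_apply]
    rw [h1, JmatC_eq_map, ← map_mul_ofReal, ← map_mul_ofReal, ← hAJ]
  -- μ is real
  have hx : star v ⬝ᵥ ((A.map Complex.ofReal * JmatC D) *ᵥ v) = μ * (star v ⬝ᵥ v) := by
    rw [heig, dotProduct_smul, smul_eq_mul]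
  have hμreal : star μ = μ := by
    have h1 := hermitian_quad_real _ hMherm v
    rw [hx] at h1
    have hc : star v ⬝ᵥ v = (∑ i, (Complex.normSq (v i) : ℂ)) := by
      simp [dotProduct, Complex.normSq_eq_conj_mul_self]
    have hcreal : star (star v ⬝ᵥ v) = star v ⬝ᵥ v := by
      rw [hc, ← Complex.ofReal_sum]
      simp
    have hcne : star v ⬝ᵥ v ≠ 0 := by
      rw [hc, ← Complex.ofReal_sum]
      have hpos : (0:ℝ) < ∑ i, Complex.normSq (v i) := by
        obtain ⟨i, hi⟩ := Function.ne_iff.mp hv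
        exact Finset.sum_pos' (fun j _ => Complex.normSq_nonneg _)
          ⟨i, Finset.mem_univ i, Complex.normSq_pos.mpr hi⟩
      exact_mod_cast hpos.ne'
    rw [star_mul', hcreal] at h1
    exact mul_right_cancel₀ hcne h1
  have hμim : μ.im = 0 := by
    have := congrArg Complex.im hμreal
    simp only [Complex.star_def, Complex.conj_im] at this
    linarith
  -- csgn q = ±1
  have hqre : q.re ≠ 0 := by
    intro h
    exact hnull (Complex.ext h hqim)
  rcases lt_or_gt_of_ne hqre with h | h
  · have hs : csgn q = -1 := by simp [csgn, h, not_lt.mpr h.le, asymm h]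
    rw [hμ, hs] at hμim
    simpa using hμim
  · have hs : csgn q = 1 := by simp [csgn, h]
    rw [hμ, hs] at hμim
    simpa using hμim
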